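/- Let b₁,…,b_n ∈ ℝ^n and let Π_{ℓ−1} denote the orthogonal projection onto the orthogonal complement of span{b₁,…,b_{ℓ−1}} (Π₀ = Id). Define R_i = {Σ_{ℓ=1}^i α_ℓ Π_{ℓ−1}b_ℓ : |α_ℓ| ≤ 1}. Then for every i ∈ [n], R_i ⊆ {Σ_{ℓ=1}^i z_ℓ b_ℓ : Σ_{ℓ=1}^i z_ℓ² ≤ (4^i − 1)/3}, provided each b_ℓ satisfies that b_ℓ − Π_{ℓ−1}b_ℓ lies in R_{ℓ−1}. -/

import Mathlib

open Finset

noncomputable def projPerp {n : ℕ} (b : Fin n → EuclideanSpace ℝ (Fin n)) (i : ℕ) :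
    EuclideanSpace ℝ (Fin n) → EuclideanSpace ℝ (Fin n) :=
  fun v => (Submodule.orthogonalProjectionOnto
    ((Submodule.span ℝ (b '' {j : Fin n | (j : ℕ) < i}))ᗮ) v : EuclideanSpace ℝ (Fin n))

noncomputable def rect {n : ℕ} (b : Fin n → EuclideanSpace ℝ (Fin n)) (i : ℕ) :
    Set (EuclideanSpace ℝ (Fin n)) :=
  {x | ∃ α : Fin n → ℝ, (∀ ℓ, |α ℓ| ≤ 1) ∧
    x = ∑ ℓ ∈ univ.filter (fun ℓ : Fin n => (ℓ : ℕ) < i),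
          α ℓ • projPerp b (ℓ : ℕ) (b ℓ)}

lemma filter_succ_eq {n i : ℕ} (h : i < n) :
    univ.filter (fun ℓ : Fin n => (ℓ : ℕ) < i + 1)
      = insert ⟨i, h⟩ (univ.filter (fun ℓ : Fin n => (ℓ : ℕ) < i)) := by
  ext j
  simp [Fin.ext_iff]
  omega

lemma notmem_filter {n i : ℕ} (h : i < n) :
    (⟨i, h⟩ : Fin n) ∉ univ.filter (fun ℓ : Fin n => (ℓ : ℕ) < i) := by
  simp

lemma main_lemma {n : ℕ} (b : Fin n → EuclideanSpace ℝ (Fin n))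
    (hb : ∀ ℓ : Fin n, b ℓ - projPerp b (ℓ : ℕ) (b ℓ) ∈ rect b (ℓ : ℕ)) :
    ∀ i : ℕ, i ≤ n → ∀ x ∈ rect b i,
      ∃ z : Fin n → ℝ,
        (∀ ℓ : Fin n, ((ℓ : ℕ) < i → |z ℓ| ≤ 2 ^ (i - 1 - (ℓ : ℕ))) ∧
          (i ≤ (ℓ : ℕ) → z ℓ = 0)) ∧
        x = ∑ ℓ ∈ univ.filter (fun ℓ : Fin n => (ℓ : ℕ) < i), z ℓ • b ℓ := by
  intro i
  induction i with
  | zero =>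
    intro _ x hx
    obtain ⟨α, hα, hx⟩ := hx
    refine ⟨0, by simp, ?_⟩
    simpa using hx
  | succ i ih =>
    intro hin x hx
    have hi : i < n := hin
    have hile : i ≤ n := le_of_lt hi
    set I : Fin n := ⟨i, hi⟩ with hI
    obtain ⟨α, hα, hx⟩ := hx
    rw [filter_succ_eq hi, Finset.sum_insert (notmem_filter hi)] at hx
    -- x₁ ∈ rect b i
    have hx1 : (∑ ℓ ∈ univ.filter (fun ℓ : Fin n => (ℓ : ℕ) < i),
        α ℓ • projPerp b (ℓ : ℕ) (b ℓ)) ∈ rect b i := ⟨α, hα, rfl⟩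
    obtain ⟨z₁, hz₁, hxz₁⟩ := ih hile _ hx1
    have hbI : b I - projPerp b (I : ℕ) (b I) ∈ rect b i := by
      have := hb I
      simpa [hI] using this
    obtain ⟨z₂, hz₂, hxz₂⟩ := ih hile _ hbI
    refine ⟨fun ℓ => if (ℓ : ℕ) < i then z₁ ℓ - α I * z₂ ℓ
      else if (ℓ : ℕ) = i then α I else 0, ?_, ?_⟩
    · intro ℓ
      constructor
      · intro hℓ
        by_cases h1 : (ℓ : ℕ) < i
        · simp only [if_pos h1]
          have b1 := (hz₁ ℓ).1 h1
          have b2 := (hz₂ ℓ).1 h1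
          have : |z₁ ℓ - α I * z₂ ℓ| ≤ |z₁ ℓ| + |α I| * |z₂ ℓ| := by
            calc |z₁ ℓ - α I * z₂ ℓ| ≤ |z₁ ℓ| + |α I * z₂ ℓ| := abs_sub _ _
            _ = |z₁ ℓ| + |α I| * |z₂ ℓ| := by rw [abs_mul]
          have hαI : |α I| ≤ 1 := hα I
          have h2 : |α I| * |z₂ ℓ| ≤ (2:ℝ) ^ (i - 1 - (ℓ:ℕ)) := by
            calc |α I| * |z₂ ℓ| ≤ 1 * |z₂ ℓ| :=
              mul_le_mul_of_nonneg_right hαI (abs_nonneg _)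
            _ = |z₂ ℓ| := one_mul _
            _ ≤ _ := b2
          have key : (2:ℝ) ^ (i - 1 - (ℓ:ℕ)) + 2 ^ (i - 1 - (ℓ:ℕ))
              = 2 ^ (i + 1 - 1 - (ℓ:ℕ)) := by
            have : i + 1 - 1 - (ℓ:ℕ) = (i - 1 - (ℓ:ℕ)) + 1 := by omega
            rw [this, pow_succ]
            ring
          linarith
        · have h2 : (ℓ : ℕ) = i := by omega
          simp only [if_neg h1, if_pos h2]
          have : i + 1 - 1 - (ℓ:ℕ) = 0 := by omega
          rw [this, pow_zero]
          exact hα I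
      · intro hℓ
        have h1 : ¬ (ℓ:ℕ) < i := by omega
        have h2 : ¬ (ℓ:ℕ) = i := by omega
        simp [h1, h2]
    · rw [filter_succ_eq hi, Finset.sum_insert (notmem_filter hi)]
      have hIval : ((I : Fin n) : ℕ) = i := rfl
      have hzI : (fun ℓ : Fin n => if (ℓ : ℕ) < i then z₁ ℓ - α I * z₂ ℓ
          else if (ℓ : ℕ) = i then α I else 0) ⟨i, hi⟩ = α I := by
        simp
      rw [hzI]
      have hsum : ∑ ℓ ∈ univ.filter (fun ℓ : Fin n => (ℓ : ℕ) < i),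
          (if (ℓ : ℕ) < i then z₁ ℓ - α I * z₂ ℓ
            else if (ℓ : ℕ) = i then α I else 0) • b ℓ
          = ∑ ℓ ∈ univ.filter (fun ℓ : Fin n => (ℓ : ℕ) < i),
            (z₁ ℓ - α I * z₂ ℓ) • b ℓ := by
        apply Finset.sum_congr rfl
        intro ℓ hℓ
        rw [Finset.mem_filter] at hℓ
        rw [if_pos hℓ.2]
      rw [hsum]
      have hpI : projPerp b (I : ℕ) (b I)
          = b I - ∑ ℓ ∈ univ.filter (fun ℓ : Fin n => (ℓ : ℕ) < i), z₂ ℓ • b ℓ := by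
        rw [← hxz₂]; abel
      rw [hx, hxz₁, hpI]
      rw [Finset.sum_congr rfl (fun ℓ _ => sub_smul (z₁ ℓ) (α I * z₂ ℓ) (b ℓ)),
        Finset.sum_sub_distrib]
      rw [smul_sub, Finset.smul_sum]
      rw [Finset.sum_congr rfl (fun ℓ _ => (mul_smul (α I) (z₂ ℓ) (b ℓ)).symm)]
      abel

lemma geom_sum_lemma {n : ℕ} : ∀ i : ℕ, i ≤ n →
    ∑ ℓ ∈ univ.filter (fun ℓ : Fin n => (ℓ : ℕ) < i), (4:ℝ) ^ (i - 1 - (ℓ:ℕ))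
      = ((4:ℝ) ^ i - 1) / 3 := by
  intro i
  induction i with
  | zero => intro _; simp
  | succ i ih =>
    intro hin
    have hi : i < n := hin
    rw [filter_succ_eq hi, Finset.sum_insert (notmem_filter hi)]
    have h1 : ∑ ℓ ∈ univ.filter (fun ℓ : Fin n => (ℓ : ℕ) < i),
        (4:ℝ) ^ (i + 1 - 1 - (ℓ:ℕ))
        = ∑ ℓ ∈ univ.filter (fun ℓ : Fin n => (ℓ : ℕ) < i),
          4 * (4:ℝ) ^ (i - 1 - (ℓ:ℕ)) := by
      apply Finset.sum_congr rfl
      intro ℓ hℓ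
      rw [Finset.mem_filter] at hℓ
      have : i + 1 - 1 - (ℓ:ℕ) = (i - 1 - (ℓ:ℕ)) + 1 := by omega
      rw [this, pow_succ]; ring
    rw [h1, ← Finset.mul_sum, ih (le_of_lt hi)]
    have : i + 1 - 1 - ((⟨i, hi⟩ : Fin n) : ℕ) = 0 := by simp
    rw [this, pow_zero, pow_succ]
    ring

theorem rect_subset_ellipsoid {n : ℕ} (b : Fin n → EuclideanSpace ℝ (Fin n))
    (hb : ∀ ℓ : Fin n, b ℓ - projPerp b (ℓ : ℕ) (b ℓ) ∈ rect b (ℓ : ℕ)) :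
    ∀ i : ℕ, i ≤ n → ∀ x ∈ rect b i,
      ∃ z : Fin n → ℝ,
        (∑ ℓ ∈ univ.filter (fun ℓ : Fin n => (ℓ : ℕ) < i), (z ℓ) ^ 2)
            ≤ ((4 : ℝ) ^ i - 1) / 3 ∧
        x = ∑ ℓ ∈ univ.filter (fun ℓ : Fin n => (ℓ : ℕ) < i), z ℓ • b ℓ := by
  intro i hin x hx
  obtain ⟨z, hz, hxz⟩ := main_lemma b hb i hin x hx
  refine ⟨z, ?_, hxz⟩
  calc ∑ ℓ ∈ univ.filter (fun ℓ : Fin n => (ℓ : ℕ) < i), (z ℓ) ^ 2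
      ≤ ∑ ℓ ∈ univ.filter (fun ℓ : Fin n => (ℓ : ℕ) < i), (4:ℝ) ^ (i - 1 - (ℓ:ℕ)) := by
        apply Finset.sum_le_sum
        intro ℓ hℓ
        rw [Finset.mem_filter] at hℓ
        have hb := (hz ℓ).1 hℓ.2
        calc (z ℓ) ^ 2 = |z ℓ| ^ 2 := (sq_abs _).symm
        _ ≤ ((2:ℝ) ^ (i - 1 - (ℓ:ℕ))) ^ 2 :=
            pow_le_pow_left₀ (abs_nonneg _) hb 2
        _ = (4:ℝ) ^ (i - 1 - (ℓ:ℕ)) := by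
            rw [← pow_mul, mul_comm, pow_mul]
            norm_num
    _ = ((4:ℝ) ^ i - 1) / 3 := geom_sum_lemma i hin
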